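/- Suppose x₁, x₂ ∈ Kⁿ satisfy dir(x₁) ∩ dir(x₂) = 0. Then dir(x₁ + x₂) ⊆ dir(x₁) + dir(x₂). -/

import Mathlib

noncomputable section

open scoped Classical Pointwise

section Preamble

variable {K : Type*} [Field K] {Γ : Type*} [LinearOrderedCommGroupWithZero Γ]

instance (priority := 100) : OrderBot Γ where
  bot := 0
  bot_le _ := zero_le'

/-- The max-valuation on `K^n`: `v(a) = maxᵢ v(aᵢ)`. -/
def vv (v : Valuation K Γ) {n : ℕ} (x : Fin n → K) : Γ :=
  Finset.univ.sup fun i => v (x i)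

/-- `rvEq v x y` expresses `rv(x) = rv(y)` in `RV⁽ⁿ⁾ = Kⁿ/∼`, where
`x ∼ y` iff `v(x−y) < v(x)` or `x = y = 0`. -/
def rvEq (v : Valuation K Γ) {n : ℕ} (x y : Fin n → K) : Prop :=
  vv v (x - y) < vv v x ∨ (x = 0 ∧ y = 0)

/-- Balls in `K` (with `K` itself counting as a ball). -/
def IsBall1 (v : Valuation K Γ) (B : Set K) : Prop :=
  B = Set.univ ∨ ∃ a : K, ∃ γ : Γ, γ ≠ 0 ∧
    (B = {x | v (x - a) < γ} ∨ B = {x | v (x - a) ≤ γ})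

/-- Balls in `Kⁿ` (with `Kⁿ` itself counting as a ball). -/
def IsBall (v : Valuation K Γ) {n : ℕ} (B : Set (Fin n → K)) : Prop :=
  B = Set.univ ∨ ∃ a : Fin n → K, ∃ γ : Γ, γ ≠ 0 ∧
    (B = {x | vv v (x - a) < γ} ∨ B = {x | vv v (x - a) ≤ γ})

/-- Spherical completeness: every nonempty chain of balls in `K` has nonempty
intersection. -/
def SphericallyComplete (v : Valuation K Γ) : Prop :=
  ∀ C : Set (Set K), C.Nonempty → (∀ B ∈ C, IsBall1 v B) → IsChain (· ⊆ ·) C →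
    (⋂ B ∈ C, B).Nonempty

/-- The residue field `K̄` of the valuation ring `𝒪 = {x | v x ≤ 1}`. -/
def Kbar (v : Valuation K Γ) : Type _ :=
  IsLocalRing.ResidueField v.valuationSubring

instance (v : Valuation K Γ) : Field (Kbar v) :=
  inferInstanceAs (Field (IsLocalRing.ResidueField v.valuationSubring))

/-- The residue map `res : 𝒪 → K̄`, extended by the junk value `0` outside `𝒪`. -/
def res' (v : Valuation K Γ) (x : K) : Kbar v :=
  if h : v x ≤ 1 then IsLocalRing.residue v.valuationSubring ⟨x, h⟩ else 0

/-- The coordinatewise residue map on `Kⁿ`. -/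
def resv (v : Valuation K Γ) {n : ℕ} (x : Fin n → K) : Fin n → Kbar v :=
  fun i => res' v (x i)

/-- `res(S)` for a set `S ⊆ Kⁿ`: the set of residues of points of `S ∩ 𝒪ⁿ`. -/
def resSet (v : Valuation K Γ) {n : ℕ} (S : Set (Fin n → K)) : Set (Fin n → Kbar v) :=
  resv v '' {x ∈ S | ∀ i, v (x i) ≤ 1}

/-- `dir(x) = res(K·x) ⊆ K̄ⁿ`. -/
def dirSet (v : Valuation K Γ) {n : ℕ} (x : Fin n → K) : Set (Fin n → Kbar v) :=
  resSet v {y | ∃ c : K, y = c • x}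

/-- The coordinate projection `Kⁿ → K^d` selecting the coordinates `σ 0 < σ 1 < ⋯`. -/
def proj {A : Type*} {n d : ℕ} (σ : Fin d → Fin n) (x : Fin n → A) : Fin d → A :=
  fun k => x (σ k)

/-- `σ` (a strictly increasing selection of `d` of the `n` coordinates) is an
exhibition of the `K̄`-subspace `Ū ⊆ K̄ⁿ` if the corresponding coordinate projection
`K̄ⁿ → K̄^d` restricts to an isomorphism from `Ū` onto `K̄^d`. -/
def IsExhibition (v : Valuation K Γ) {n d : ℕ} (σ : Fin d → Fin n)
    (Ubar : Submodule (Kbar v) (Fin n → Kbar v)) : Prop :=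
  StrictMono σ ∧ Set.BijOn (proj σ) (Ubar : Set (Fin n → Kbar v)) Set.univ

/-- `affdir(C)`: the `K̄`-subspace of `K̄ⁿ` generated by all `dir(x − x')`, `x, x' ∈ C`. -/
def affdir (v : Valuation K Γ) {n : ℕ} (C : Set (Fin n → K)) :
    Submodule (Kbar v) (Fin n → Kbar v) :=
  Submodule.span (Kbar v) (⋃ x ∈ C, ⋃ x' ∈ C, dirSet v (x - x'))

/-- A matrix has entries in the valuation ring `𝒪`. -/
def EntriesInO (v : Valuation K Γ) {n : ℕ} (M : Matrix (Fin n) (Fin n) K) : Prop :=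
  ∀ i j, v (M i j) ≤ 1

/-- `M ∈ GLₙ(𝒪)`: `M` is invertible, with entries in `𝒪`, and its inverse also has
entries in `𝒪`. -/
def MemGLO (v : Valuation K Γ) {n : ℕ} (M : Matrix (Fin n) (Fin n) K) : Prop :=
  EntriesInO v M ∧ ∃ N : Matrix (Fin n) (Fin n) K,
    M * N = 1 ∧ N * M = 1 ∧ EntriesInO v N

/-- The entrywise residue matrix of `M`. -/
def resM (v : Valuation K Γ) {n : ℕ} (M : Matrix (Fin n) (Fin n) K) :
    Matrix (Fin n) (Fin n) (Kbar v) :=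
  fun i j => res' v (M i j)

/-- `DeltaLE v U W γ` expresses `Δ(U, W) ≤ γ`: for every `u ∈ U` there is `w ∈ W`
with `v(u − w) ≤ v(u)·γ`. -/
def DeltaLE (v : Valuation K Γ) {n : ℕ} (U W : Submodule K (Fin n → K)) (γ : Γ) : Prop :=
  ∀ u ∈ U, ∃ w ∈ W, vv v (u - w) ≤ vv v u * γ

/-- `IsDelta v U W γ` expresses `Δ(U, W) = γ`: `γ` is the minimum of all admissible
bounds. -/
def IsDelta (v : Valuation K Γ) {n : ℕ} (U W : Submodule K (Fin n → K)) (γ : Γ) : Prop :=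
  DeltaLE v U W γ ∧ ∀ δ : Γ, DeltaLE v U W δ → γ ≤ δ

end Preamble

variable {K : Type*} [Field K] {Γ : Type*} [LinearOrderedCommGroupWithZero Γ]


lemma vv_le_iff {v : Valuation K Γ} {n : ℕ} {x : Fin n → K} {γ : Γ} :
    vv v x ≤ γ ↔ ∀ i, v (x i) ≤ γ := by
  simp [vv, Finset.sup_le_iff]

lemma le_vv (v : Valuation K Γ) {n : ℕ} (x : Fin n → K) (i : Fin n) :
    v (x i) ≤ vv v x :=
  Finset.le_sup (f := fun j => v (x j)) (Finset.mem_univ i)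


lemma vv_add_le (v : Valuation K Γ) {n : ℕ} (x y : Fin n → K) :
    vv v (x + y) ≤ max (vv v x) (vv v y) := by
  rw [vv_le_iff]
  intro i
  exact le_trans (v.map_add _ _) (max_le_max (le_vv v x i) (le_vv v y i))

lemma vv_neg (v : Valuation K Γ) {n : ℕ} (x : Fin n → K) :
    vv v (-x) = vv v x := by
  simp [vv, Valuation.map_neg]

lemma vv_le_max (v : Valuation K Γ) {n : ℕ} (a b : Fin n → K) :
    vv v b ≤ max (vv v (a + b)) (vv v a) := by
  have hb : b = (a + b) + (-a) := by abel
  calc vv v b = vv v ((a + b) + (-a)) := by rw [← hb]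
    _ ≤ max (vv v (a + b)) (vv v (-a)) := vv_add_le v _ _
    _ = max (vv v (a + b)) (vv v a) := by rw [vv_neg]

lemma res'_add (v : Valuation K Γ) {a b : K} (ha : v a ≤ 1) (hb : v b ≤ 1) :
    res' v (a + b) = res' v a + res' v b := by
  have hab : v (a + b) ≤ 1 := le_trans (v.map_add a b) (max_le ha hb)
  simp only [res', dif_pos ha, dif_pos hb, dif_pos hab]
  exact (dif_pos hab).trans ((map_add (IsLocalRing.residue v.valuationSubring) ⟨a, ha⟩ ⟨b, hb⟩).trans (congrArg₂ (· + ·) (Eq.symm (dif_pos ha)) (Eq.symm (dif_pos hb))))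

lemma res'_neg (v : Valuation K Γ) {a : K} (ha : v a ≤ 1) :
    res' v (-a) = - res' v a := by
  have hna : v (-a) ≤ 1 := by rwa [v.map_neg]
  simp only [res', dif_pos ha, dif_pos hna]
  exact (dif_pos hna).trans ((map_neg (IsLocalRing.residue v.valuationSubring) ⟨a, ha⟩).trans (congrArg Neg.neg (Eq.symm (dif_pos ha))))

lemma res'_one (v : Valuation K Γ) : res' v 1 = 1 := by
  simp only [res', dif_pos (le_of_eq v.map_one)]
  exact (dif_pos (le_of_eq v.map_one)).trans (map_one (IsLocalRing.residue v.valuationSubring))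

lemma res'_eq_zero (v : Valuation K Γ) {a : K} (ha : v a < 1) :
    res' v a = 0 := by
  have ha' : v a ≤ 1 := le_of_lt ha
  simp only [res', dif_pos ha']
  refine (dif_pos ha').trans ?_
  rw [IsLocalRing.residue]
  refine (Ideal.Quotient.eq_zero_iff_mem (I := IsLocalRing.maximalIdeal v.valuationSubring)).mpr ?_
  rw [IsLocalRing.mem_maximalIdeal, mem_nonunits_iff]
  rintro ⟨u, hu⟩
  have h1 : ((u : v.valuationSubring) : K) * ((u⁻¹ : v.valuationSubringˣ) : K) = 1 := by
    exact_mod_cast congrArg (fun x : v.valuationSubring => (x : K)) u.mul_inv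
  have hv : v ((u : v.valuationSubring) : K) * v (((u⁻¹ : v.valuationSubringˣ) : K)) = 1 := by
    rw [← v.map_mul, h1, v.map_one]
  have hu1 : v ((u : v.valuationSubring) : K) < 1 := hu ▸ ha
  have hle : v (((u⁻¹ : v.valuationSubringˣ) : K)) ≤ 1 :=
    ((u⁻¹ : v.valuationSubringˣ) : v.valuationSubring).2
  have := mul_lt_one_of_lt_of_le hu1 hle
  rw [hv] at this
  exact lt_irrefl 1 this

/-- if `dir x₁ ∩ dir x₂ = 0`, then
`dir (x₁ + x₂) ⊆ dir x₁ + dir x₂`. -/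
theorem dirSet_add_subset
    (v : Valuation K Γ) {n : ℕ} (x₁ x₂ : Fin n → K)
    (h : dirSet v x₁ ∩ dirSet v x₂ = {0}) :
    dirSet v (x₁ + x₂) ⊆ dirSet v x₁ + dirSet v x₂ := by
  rintro y ⟨z, ⟨⟨c, rfl⟩, hz⟩, rfl⟩
  set a := c • x₁ with ha_def
  set b := c • x₂ with hb_def
  have hcc : c • (x₁ + x₂) = a + b := smul_add c x₁ x₂
  have hsum : vv v (a + b) ≤ 1 := by rw [← hcc]; exact vv_le_iff.mpr hz
  have key : vv v a ≤ 1 ∧ vv v b ≤ 1 := by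
    by_contra hk
    have hab : vv v a = vv v b := by
      rcases lt_trichotomy (vv v a) (vv v b) with hlt | heq | hgt
      · exfalso
        have h1b : 1 < vv v b := by
          rcases not_and_or.mp hk with h' | h'
          · exact lt_trans (lt_of_not_ge h') hlt
          · exact lt_of_not_ge h'
        exact absurd (vv_le_max v a b) (not_le.mpr (max_lt (lt_of_le_of_lt hsum h1b) hlt))
      · exact heq
      · exfalso
        have h1a : 1 < vv v a := by
          rcases not_and_or.mp hk with h' | h'
          · exact lt_of_not_ge h'
          · exact lt_trans (lt_of_not_ge h') hgt
        have : vv v a ≤ max (vv v (b + a)) (vv v b) := vv_le_max v b a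
        rw [add_comm b a] at this
        exact absurd this (not_le.mpr (max_lt (lt_of_le_of_lt hsum h1a) hgt))
    set γ : Γ := vv v a with hγdef
    have h1γ : 1 < γ := by
      rcases not_and_or.mp hk with h' | h'
      · exact lt_of_not_ge h'
      · exact lt_of_lt_of_eq (lt_of_not_ge h') hab.symm
    have hγ0 : γ ≠ 0 := by
      intro h0
      rw [h0] at h1γ
      exact absurd h1γ (not_lt_of_ge zero_le')
    have hn : (Finset.univ : Finset (Fin n)).Nonempty := by
      rcases (Finset.univ : Finset (Fin n)).eq_empty_or_nonempty with h | h
      · exfalso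
        have : γ = ⊥ := by rw [hγdef, vv, h, Finset.sup_empty]
        rw [this] at h1γ
        exact absurd h1γ (not_lt_of_ge (by exact bot_le))
      · exact h
    obtain ⟨j, _, hj⟩ := Finset.exists_mem_eq_sup Finset.univ hn (fun i => v (a i))
    have hd : v (a j) = γ := hj.symm
    have hdne : a j ≠ 0 := fun h => hγ0 (by rw [← hd, h, v.map_zero])
    set d := a j with hddef
    -- scaled vectors
    have hva : ∀ i, v ((d⁻¹ • a) i) ≤ 1 := by
      intro i
      have : v (d⁻¹ * a i) = γ⁻¹ * v (a i) := by rw [v.map_mul, map_inv₀, hd]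
      show v (d⁻¹ * a i) ≤ 1
      rw [this, ← inv_mul_cancel₀ hγ0]
      exact mul_le_mul_right (le_vv v a i) γ⁻¹
    have hvb : ∀ i, v ((d⁻¹ • b) i) ≤ 1 := by
      intro i
      have : v (d⁻¹ * b i) = γ⁻¹ * v (b i) := by rw [v.map_mul, map_inv₀, hd]
      show v (d⁻¹ * b i) ≤ 1
      rw [this, ← inv_mul_cancel₀ hγ0]
      exact mul_le_mul_right (hab ▸ le_vv v b i) γ⁻¹
    set r₁ := resv v (d⁻¹ • a) with hr₁
    set r₂ := resv v (d⁻¹ • b) with hr₂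
    have hmem₁ : r₁ ∈ dirSet v x₁ :=
      ⟨d⁻¹ • a, ⟨⟨d⁻¹ * c, by rw [ha_def, smul_smul]⟩, hva⟩, rfl⟩
    have hsum0 : r₁ + r₂ = 0 := by
      funext i
      have e1 : (r₁ + r₂) i = res' v (d⁻¹ * a i) + res' v (d⁻¹ * b i) := rfl
      have e2 : res' v (d⁻¹ * a i) + res' v (d⁻¹ * b i) = res' v (d⁻¹ * a i + d⁻¹ * b i) :=
        (res'_add v (hva i) (hvb i)).symm
      have e3 : d⁻¹ * a i + d⁻¹ * b i = d⁻¹ * (a + b) i := by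
        show _ = d⁻¹ * (a i + b i); ring
      have hlt : v (d⁻¹ * (a + b) i) < 1 := by
        have : v (d⁻¹ * (a + b) i) ≤ γ⁻¹ * 1 := by
          rw [v.map_mul, map_inv₀, hd]
          exact mul_le_mul_right (le_trans (le_vv v (a + b) i) hsum) γ⁻¹
        apply lt_of_le_of_lt this
        rw [mul_one]
        have : γ⁻¹ * 1 < γ⁻¹ * γ := by
          refine lt_of_le_of_ne (mul_le_mul_right h1γ.le γ⁻¹) ?_
          intro hcon
          exact (ne_of_lt h1γ) (mul_left_cancel₀ (inv_ne_zero hγ0) hcon)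
        rw [mul_one, inv_mul_cancel₀ hγ0] at this
        exact this
      rw [e1, e2, e3, res'_eq_zero v hlt]
      rfl
    have hmem₂ : r₁ ∈ dirSet v x₂ := by
      have hneg : r₁ = resv v ((-d⁻¹) • b) := by
        funext i
        have : r₁ i = - r₂ i := eq_neg_of_add_eq_zero_left (congrFun hsum0 i)
        rw [this]
        show - res' v (d⁻¹ * b i) = res' v ((-d⁻¹) * b i)
        rw [neg_mul, res'_neg v (a := d⁻¹ * b i) (hvb i)]
      have hvnb : ∀ i, v (((-d⁻¹) • b) i) ≤ 1 := by
        intro i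
        show v ((-d⁻¹) * b i) ≤ 1
        rw [neg_mul, v.map_neg]
        exact hvb i
      exact ⟨(-d⁻¹) • b, ⟨⟨(-d⁻¹) * c, by rw [hb_def, smul_smul]⟩, hvnb⟩, hneg.symm⟩
    have : r₁ ∈ ({0} : Set (Fin n → Kbar v)) := h ▸ ⟨hmem₁, hmem₂⟩
    have hr0 : r₁ = 0 := this
    have : r₁ j = 1 := by
      show res' v (d⁻¹ * a j) = 1
      rw [← hddef, inv_mul_cancel₀ hdne, res'_one]
    rw [hr0] at this
    exact one_ne_zero this.symm
  obtain ⟨k1, k2⟩ := key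
  have h1 : ∀ i, v (a i) ≤ 1 := vv_le_iff.mp k1
  have h2 : ∀ i, v (b i) ≤ 1 := vv_le_iff.mp k2
  have hre : resv v (c • (x₁ + x₂)) = resv v a + resv v b := by
    funext i
    have : (c • (x₁ + x₂)) i = a i + b i := by rw [hcc]; rfl
    rw [resv, this, res'_add v (h1 i) (h2 i)]; rfl
  rw [hre]
  exact Set.add_mem_add ⟨a, ⟨⟨c, rfl⟩, h1⟩, rfl⟩ ⟨b, ⟨⟨c, rfl⟩, h2⟩, rfl⟩

end
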